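/- Fix α ∈ [0, π/2), c = (c₁, c₂) ∈ ℝ², and a, b ∈ ℝ. For ε > 0, let E_ε ⊆ ℝ² be the closed ellipse with center εc, semi-axis 1 + εa in the direction (cos α, sin α) and semi-axis 1 + εb in the direction (−sin α, cos α); that is, E_ε = {z ∈ ℝ² : (⟨z − εc, (cos α, sin α)⟩ / (1 + εa))² + (⟨z − εc, (−sin α, cos α)⟩ / (1 + εb))² ≤ 1}. For θ ∈ [0, 2π), let r_ε(θ) = sup{r ≥ 0 : r(cos θ, sin θ) ∈ E_ε} be the radial function of E_ε. Then, as ε → 0⁺, (r_ε(θ) − 1)/ε converges, uniformly in θ ∈ [0, 2π), to f(θ) = c₁ cos θ + c₂ sin θ + a cos²(θ − α) + b sin²(θ − α). -/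

import Mathlib

open Real Filter Topology

def Pg (e t C S k1 k2 a b : ℝ) : ℝ :=
  -4*a*b - a^2 + k2^2 + k1^2 - 4*S*k2*a - S^2*b^2 + S^2*a^2 - 4*C*k1*b + 4*t*b
  - 2*t*S*k2 - 4*t*S^2*b + 4*t*S^2*a - 2*t*C*k1 + t^2 - 2*e*a*b^2 - 2*e*a^2*b
  + 2*e*k2^2*a + 2*e*k1^2*b - 2*e*S*k2*a^2 - 2*e*C*k1*b^2 + 2*e*t*b^2
  - 4*e*t*S*k2*a - 2*e*t*S^2*b^2 + 2*e*t*S^2*a^2 - 4*e*t*C*k1*b + 2*e*t^2*b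
  - 2*e*t^2*S^2*b + 2*e*t^2*S^2*a - e^2*a^2*b^2 + e^2*k2^2*a^2 + e^2*k1^2*b^2
  - 2*e^2*t*S*k2*a^2 - 2*e^2*t*C*k1*b^2 + e^2*t^2*b^2 - e^2*t^2*S^2*b^2
  + e^2*t^2*S^2*a^2

lemma Pg_ident (e t C S k1 k2 a b : ℝ) (h : C^2 + S^2 = 1) :
    (1+e*b)^2*((1+e*t)*C - e*k1)^2 + (1+e*a)^2*((1+e*t)*S - e*k2)^2
      - (1+e*a)^2*(1+e*b)^2
    = 2*e*(t - (k1*C + k2*S + a*C^2 + b*S^2)) + e^2 * Pg e t C S k1 k2 a b := by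
  unfold Pg
  linear_combination (1 + 2*e*b + 2*e*a + 2*e*t + e^2*b^2 + 4*e^2*t*b + e^2*t^2
    + 2*e^3*t*b^2 + 2*e^3*t^2*b + e^4*t^2*b^2) * h

lemma quad_mono (A B D r₁ r₀ r : ℝ) (hA : 0 ≤ A)
    (h1 : A*r₁^2 + B*r₁ + D ≤ 0) (h0 : 0 < A*r₀^2 + B*r₀ + D)
    (h01 : r₁ < r₀) (hr : r₀ < r) : 0 < A*r^2 + B*r + D := by
  have h01' : 0 < r₀ - r₁ := sub_pos.2 h01
  have hKm : 0 < (r₀ - r₁) * (A*(r₀+r₁) + B) := by nlinarith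
  have hK : 0 < A*(r₀+r₁) + B := by
    rcases mul_pos_iff.mp hKm with ⟨_, h⟩ | ⟨h, _⟩
    · exact h
    · linarith
  have t1 : 0 ≤ (r - r₀) * (A*(r - r₁)) :=
    mul_nonneg (by linarith) (mul_nonneg hA (by linarith))
  have t2 : 0 < (r - r₀) * (A*(r₀+r₁) + B) := mul_pos (by linarith) hK
  nlinarith [t1, t2]

set_option maxHeartbeats 2000000 in
theorem ellipse_radial_function_first_order_expansion
    (α : ℝ) (hα : α ∈ Set.Ico (0 : ℝ) (π / 2)) (c₁ c₂ a b : ℝ) :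
    let inE : ℝ → ℝ → ℝ → Prop := fun ε x y =>
      (((x - ε * c₁) * Real.cos α + (y - ε * c₂) * Real.sin α) / (1 + ε * a)) ^ 2 +
        (((x - ε * c₁) * (-Real.sin α) + (y - ε * c₂) * Real.cos α) / (1 + ε * b)) ^ 2 ≤ 1
    let rε : ℝ → ℝ → ℝ := fun ε θ =>
      sSup {r : ℝ | 0 ≤ r ∧ inE ε (r * Real.cos θ) (r * Real.sin θ)}
    TendstoUniformlyOn (fun ε θ => (rε ε θ - 1) / ε)
      (fun θ => c₁ * Real.cos θ + c₂ * Real.sin θ +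
        a * Real.cos (θ - α) ^ 2 + b * Real.sin (θ - α) ^ 2)
      (𝓝[>] (0 : ℝ)) (Set.Ico 0 (2 * π)) := by
  intro inE rε
  rw [Metric.tendstoUniformlyOn_iff]
  intro δ hδ
  set δ' : ℝ := δ / 2 with hδ'def
  have hδ'pos : 0 < δ' := by positivity
  set k1 : ℝ := c₁ * Real.cos α + c₂ * Real.sin α with hk1def
  set k2 : ℝ := c₂ * Real.cos α - c₁ * Real.sin α with hk2def
  set T : ℝ := 2 * (|c₁| + |c₂|) + |a| + |b| + δ' + 1 with hTdef
  have hT1 : 1 ≤ T := by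
    have h1 : 0 ≤ |c₁| + |c₂| := by positivity
    have h2 : 0 ≤ |a| := abs_nonneg a
    have h3 : 0 ≤ |b| := abs_nonneg b
    rw [hTdef]; linarith
  -- compactness bound for the remainder
  obtain ⟨M, hM⟩ : ∃ M, ∀ x ∈ (Set.Icc (0:ℝ) 1 ×ˢ (Set.Icc (0:ℝ) (2*π) ×ˢ Set.Icc (-T) T)),
      ‖(fun p : ℝ × ℝ × ℝ =>
          Pg p.1 p.2.2 (Real.cos (p.2.1 - α)) (Real.sin (p.2.1 - α)) k1 k2 a b) x‖ ≤ M := by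
    apply (isCompact_Icc.prod (isCompact_Icc.prod isCompact_Icc)).exists_bound_of_continuousOn
    apply Continuous.continuousOn
    unfold Pg
    fun_prop
  have hπ : (0:ℝ) < π := Real.pi_pos
  have hM0 : 0 ≤ M := by
    refine le_trans (norm_nonneg _) (hM (0, 0, 0) ?_)
    simp only [Set.mem_prod, Set.mem_Icc]
    refine ⟨⟨le_rfl, zero_le_one⟩, ⟨le_rfl, by positivity⟩, by linarith, by linarith⟩
  set ε₀ : ℝ := min 1 (min (1/(2*(T+1))) (min (δ'/(M+1)) (1/(2*(|a|+|b|+1))))) with hε₀def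
  have hε₀pos : 0 < ε₀ :=
    lt_min one_pos (lt_min (by positivity) (lt_min (by positivity) (by positivity)))
  filter_upwards [Ioo_mem_nhdsGT_of_mem (Set.left_mem_Ico.2 hε₀pos)] with ε hε
  obtain ⟨hε0, hεε₀⟩ := hε
  have hε1 : ε ≤ 1 := le_trans hεε₀.le (min_le_left _ _)
  have hεT' : ε ≤ 1/(2*(T+1)) :=
    le_trans hεε₀.le (le_trans (min_le_right _ _) (min_le_left _ _))
  have hεT : ε * T ≤ 1/2 := by
    have h2 : ε * (2*(T+1)) ≤ 1 := by
      rw [le_div_iff₀ (by positivity)] at hεT'; linarith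
    nlinarith
  have hεM' : ε ≤ δ'/(M+1) := le_trans hεε₀.le (le_trans (min_le_right _ _)
    (le_trans (min_le_right _ _) (min_le_left _ _)))
  have hεM : ε * M ≤ δ' := by
    rw [le_div_iff₀ (by positivity)] at hεM'; nlinarith
  have hεab' : ε ≤ 1/(2*(|a|+|b|+1)) := le_trans hεε₀.le (le_trans (min_le_right _ _)
    (le_trans (min_le_right _ _) (min_le_right _ _)))
  have hεab : ε * (|a| + |b|) ≤ 1/2 := by
    rw [le_div_iff₀ (by positivity)] at hεab'
    nlinarith [abs_nonneg a, abs_nonneg b]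
  have hp : (1:ℝ)/2 ≤ 1 + ε * a := by
    have := mul_le_mul_of_nonneg_left (neg_abs_le a) hε0.le
    nlinarith [abs_nonneg b]
  have hq : (1:ℝ)/2 ≤ 1 + ε * b := by
    have := mul_le_mul_of_nonneg_left (neg_abs_le b) hε0.le
    nlinarith [abs_nonneg a]
  have hp0 : (0:ℝ) < 1 + ε * a := by linarith
  have hq0 : (0:ℝ) < 1 + ε * b := by linarith
  intro θ hθ
  set C : ℝ := Real.cos (θ - α) with hCdef
  set S : ℝ := Real.sin (θ - α) with hSdef
  have hCS : C^2 + S^2 = 1 := by rw [hCdef, hSdef]; exact Real.cos_sq_add_sin_sq _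
  have hC1 : |C| ≤ 1 := by rw [hCdef]; exact Real.abs_cos_le_one _
  have hS1 : |S| ≤ 1 := by rw [hSdef]; exact Real.abs_sin_le_one _
  set fθ : ℝ := k1*C + k2*S + a*C^2 + b*S^2 with hfθdef
  -- bound |fθ|
  have hk1b : |k1| ≤ |c₁| + |c₂| := by
    rw [hk1def]
    calc |c₁ * Real.cos α + c₂ * Real.sin α| ≤ |c₁ * Real.cos α| + |c₂ * Real.sin α| :=
          abs_add_le _ _
      _ ≤ |c₁| * 1 + |c₂| * 1 := by
          rw [abs_mul, abs_mul]
          gcongr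
          · exact Real.abs_cos_le_one _
          · exact Real.abs_sin_le_one _
      _ = |c₁| + |c₂| := by ring
  have hk2b : |k2| ≤ |c₁| + |c₂| := by
    rw [hk2def, sub_eq_add_neg]
    calc |c₂ * Real.cos α + -(c₁ * Real.sin α)|
        ≤ |c₂ * Real.cos α| + |-(c₁ * Real.sin α)| := abs_add_le _ _
      _ ≤ |c₂| * 1 + |c₁| * 1 := by
          rw [abs_neg, abs_mul, abs_mul]
          gcongr
          · exact Real.abs_cos_le_one _
          · exact Real.abs_sin_le_one _
      _ = |c₁| + |c₂| := by ring
  have hfb : |fθ| ≤ T - δ' - 1 := by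
    have hC2 : C^2 ≤ 1 := by rw [hCdef]; exact Real.cos_sq_le_one _
    have hS2 : S^2 ≤ 1 := by rw [hSdef]; exact Real.sin_sq_le_one _
    calc |fθ| ≤ |k1*C| + |k2*S| + |a*C^2| + |b*S^2| := by
          rw [hfθdef]
          exact le_trans (abs_add_le _ _) (add_le_add_left (le_trans (abs_add_le _ _)
            (add_le_add_left (abs_add_le _ _) _)) _)
      _ ≤ (|c₁| + |c₂|) + (|c₁| + |c₂|) + |a| + |b| := by
          have h1 : |k1*C| ≤ |c₁| + |c₂| := by
            rw [abs_mul]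
            exact le_trans (mul_le_of_le_one_right (abs_nonneg _) hC1) hk1b
          have h2 : |k2*S| ≤ |c₁| + |c₂| := by
            rw [abs_mul]
            exact le_trans (mul_le_of_le_one_right (abs_nonneg _) hS1) hk2b
          have h3 : |a*C^2| ≤ |a| := by
            rw [abs_mul, abs_of_nonneg (sq_nonneg C)]
            exact mul_le_of_le_one_right (abs_nonneg _) hC2
          have h4 : |b*S^2| ≤ |b| := by
            rw [abs_mul, abs_of_nonneg (sq_nonneg S)]
            exact mul_le_of_le_one_right (abs_nonneg _) hS2
          linarith
      _ = T - δ' - 1 := by rw [hTdef]; ring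
  have hfb' : -T ≤ fθ ∧ fθ ≤ T := by
    have := abs_le.mp hfb; constructor <;> nlinarith [hδ'pos]
  -- remainder bounds
  have hPbound : ∀ t : ℝ, |t| ≤ T → |Pg ε t C S k1 k2 a b| ≤ M := by
    intro t ht
    have hmemx : (ε, θ, t) ∈ Set.Icc (0:ℝ) 1 ×ˢ (Set.Icc (0:ℝ) (2*π) ×ˢ Set.Icc (-T) T) := by
      simp only [Set.mem_prod, Set.mem_Icc]
      exact ⟨⟨hε0.le, hε1⟩, ⟨hθ.1, hθ.2.le⟩, abs_le.mp ht⟩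
    have := hM (ε, θ, t) hmemx
    rw [Real.norm_eq_abs] at this
    simpa [← hCdef, ← hSdef] using this
  -- the quadratic G and membership characterization
  set G : ℝ → ℝ := fun r =>
    (1+ε*b)^2*(r*C - ε*k1)^2 + (1+ε*a)^2*(r*S - ε*k2)^2 - (1+ε*a)^2*(1+ε*b)^2
    with hGdef
  have hmem : ∀ r : ℝ,
      (r ∈ {r : ℝ | 0 ≤ r ∧ inE ε (r * Real.cos θ) (r * Real.sin θ)}) ↔
      (0 ≤ r ∧ G r ≤ 0) := by
    intro r
    simp only [Set.mem_setOf_eq, inE]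
    have e1 : (r * Real.cos θ - ε * c₁) * Real.cos α + (r * Real.sin θ - ε * c₂) * Real.sin α
        = r*C - ε*k1 := by
      rw [hCdef, hk1def, Real.cos_sub]; ring
    have e2 : (r * Real.cos θ - ε * c₁) * (-Real.sin α) + (r * Real.sin θ - ε * c₂) * Real.cos α
        = r*S - ε*k2 := by
      rw [hSdef, hk2def, Real.sin_sub]; ring
    rw [e1, e2]
    constructor
    · rintro ⟨hr0, hr⟩
      refine ⟨hr0, ?_⟩
      rw [div_pow, div_pow, div_add_div _ _ (by positivity) (by positivity),
        div_le_one (by positivity)] at hr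
      simp only [hGdef]
      linarith [hr]
    · rintro ⟨hr0, hr⟩
      refine ⟨hr0, ?_⟩
      rw [div_pow, div_pow, div_add_div _ _ (by positivity) (by positivity),
        div_le_one (by positivity)]
      simp only [hGdef] at hr
      linarith [hr]
  have hGexp : ∀ t : ℝ, G (1+ε*t) = 2*ε*(t - fθ) + ε^2 * Pg ε t C S k1 k2 a b := by
    intro t
    simp only [hGdef, hfθdef]
    exact Pg_ident ε t C S k1 k2 a b hCS
  set rP : ℝ := 1 + ε*(fθ + δ') with hrPdef
  set rm : ℝ := 1 + ε*(fθ - δ') with hrmdef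
  have htub : |fθ + δ'| ≤ T ∧ |fθ - δ'| ≤ T := by
    have h := abs_le.mp hfb
    constructor <;> rw [abs_le] <;> constructor <;> linarith [h.1, h.2, hδ'pos]
  have hGrP : 0 < G rP := by
    rw [hrPdef, hGexp (fθ + δ')]
    have hPb := (abs_le.mp (hPbound _ htub.1)).1
    have hεMε : ε * (ε * M) ≤ ε * δ' := mul_le_mul_of_nonneg_left hεM hε0.le
    have hPε : ε^2 * (-M) ≤ ε^2 * Pg ε (fθ + δ') C S k1 k2 a b :=
      mul_le_mul_of_nonneg_left hPb (sq_nonneg ε)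
    nlinarith [hPε, hεMε, mul_pos hε0 hδ'pos]
  have hGrm : G rm ≤ 0 := by
    rw [hrmdef, hGexp (fθ - δ')]
    have hPb := (abs_le.mp (hPbound _ htub.2)).2
    have hεMε : ε * (ε * M) ≤ ε * δ' := mul_le_mul_of_nonneg_left hεM hε0.le
    have hPε : ε^2 * Pg ε (fθ - δ') C S k1 k2 a b ≤ ε^2 * M :=
      mul_le_mul_of_nonneg_left hPb (sq_nonneg ε)
    nlinarith [hPε, hεMε, mul_pos hε0 hδ'pos]
  have hrm0 : (0:ℝ) ≤ rm := by
    have h1 : ε * (-T) ≤ ε * (fθ - δ') :=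
      mul_le_mul_of_nonneg_left ((abs_le.mp htub.2).1) hε0.le
    rw [hrmdef]
    linarith [hεT, h1]
  have hrmrP : rm < rP := by
    rw [hrmdef, hrPdef]
    have := mul_pos hε0 hδ'pos
    linarith [this]
  have hrmmem : rm ∈ {r : ℝ | 0 ≤ r ∧ inE ε (r * Real.cos θ) (r * Real.sin θ)} :=
    (hmem rm).mpr ⟨hrm0, hGrm⟩
  -- upper bound on all members
  have hub : ∀ r ∈ {r : ℝ | 0 ≤ r ∧ inE ε (r * Real.cos θ) (r * Real.sin θ)}, r ≤ rP := by
    intro r hr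
    by_contra hcon
    push_neg at hcon
    obtain ⟨hr0, hrG⟩ := (hmem r).mp hr
    have hAform : ∀ s : ℝ, G s =
        ((1+ε*b)^2*C^2 + (1+ε*a)^2*S^2) * s^2
        + (-2*ε*((1+ε*b)^2*C*k1 + (1+ε*a)^2*S*k2)) * s
        + (ε^2*((1+ε*b)^2*k1^2 + (1+ε*a)^2*k2^2) - (1+ε*a)^2*(1+ε*b)^2) := by
      intro s; simp only [hGdef]; ring
    have hq := quad_mono ((1+ε*b)^2*C^2 + (1+ε*a)^2*S^2)
      (-2*ε*((1+ε*b)^2*C*k1 + (1+ε*a)^2*S*k2))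
      (ε^2*((1+ε*b)^2*k1^2 + (1+ε*a)^2*k2^2) - (1+ε*a)^2*(1+ε*b)^2)
      rm rP r (by positivity) (by rw [← hAform]; exact hGrm)
      (by rw [← hAform]; exact hGrP) hrmrP hcon
    rw [← hAform] at hq
    linarith
  have hbdd : BddAbove {r : ℝ | 0 ≤ r ∧ inE ε (r * Real.cos θ) (r * Real.sin θ)} := ⟨rP, hub⟩
  have hne : Set.Nonempty {r : ℝ | 0 ≤ r ∧ inE ε (r * Real.cos θ) (r * Real.sin θ)} :=
    ⟨rm, hrmmem⟩
  have hsup_le : rε ε θ ≤ rP := csSup_le hne hub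
  have hle_sup : rm ≤ rε ε θ := le_csSup hbdd hrmmem
  -- conclude
  have hfeq : c₁ * Real.cos θ + c₂ * Real.sin θ + a * Real.cos (θ - α) ^ 2
      + b * Real.sin (θ - α) ^ 2 = fθ := by
    rw [hfθdef, hCdef, hSdef, hk1def, hk2def]
    have h1 : Real.cos θ = Real.cos ((θ - α) + α) := by ring_nf
    have h2 : Real.sin θ = Real.sin ((θ - α) + α) := by ring_nf
    rw [h1, h2, Real.cos_add, Real.sin_add]
    ring
  rw [Real.dist_eq, hfeq]
  have hx1 : (rε ε θ - 1) / ε ≤ fθ + δ' := by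
    rw [div_le_iff₀ hε0]
    rw [hrPdef] at hsup_le
    linarith [hsup_le]
  have hx2 : fθ - δ' ≤ (rε ε θ - 1) / ε := by
    rw [le_div_iff₀ hε0]
    rw [hrmdef] at hle_sup
    linarith [hle_sup]
  rw [abs_sub_lt_iff]
  rw [hδ'def] at hx1 hx2
  exact ⟨by linarith, by linarith⟩
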